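/- arXiv:1210.5830 — 7 statements merged into one kernel-verified Lean document; each statement's English description precedes it below -/
import Mathlib

section
/- Under the regular partition assumption (V divides n and each block B_K of the partition B has size n/V), the bias-corrected V-fold cross-validation criterion equals the empirical risk plus the V-fold penalty with constant x = V−1: critVF_corr(m,B) = P_n γ(ŝ_m) + pen_VF(m, B, V−1). -/
open Finset

/-- Empirical mean of `f` over the sample points indexed by `A`. -/
noncomputable def emp {X : Type*} {n : ℕ} (ξ : Fin n → X) (A : Finset (Fin n))
    (f : X → ℝ) : ℝ :=
  (A.card : ℝ)⁻¹ * ∑ i ∈ A, f (ξ i)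

/-- `P_n^{(A)} γ(t)` for `t ∈ S_m` with coordinates `t : Λ → ℝ` in the orthonormal
basis `(ψ l)`: `‖t‖² − 2 P_n^{(A)} t`. -/
noncomputable def empRisk {X : Type*} {Λ : Type*} [Fintype Λ] {n : ℕ}
    (ψ : Λ → X → ℝ) (ξ : Fin n → X) (A : Finset (Fin n)) (t : Λ → ℝ) : ℝ :=
  ∑ l, (t l) ^ 2 - 2 * ∑ l, t l * emp ξ A (ψ l)

lemma emp_key {X : Type*} {n V : ℕ} (hV : 2 ≤ V) (hVn : V ∣ n)
    (ξ : Fin n → X) (A : Finset (Fin n)) (hA : A.card = n / V) (f : X → ℝ) :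
    emp ξ A f - emp ξ Finset.univ f
      = ((V:ℝ)-1) * (emp ξ Finset.univ f - emp ξ Aᶜ f) := by
  obtain ⟨m, rfl⟩ := hVn
  have hm : (V*m)/V = m := Nat.mul_div_cancel_left _ (by omega)
  rcases Nat.eq_zero_or_pos m with hm0 | hm0
  · subst hm0
    haveI : IsEmpty (Fin (V*0)) := ⟨fun x => absurd x.2 (by simp)⟩
    have hA0 : A = ∅ := Finset.eq_empty_of_isEmpty A
    have hAc : Aᶜ = ∅ := Finset.eq_empty_of_isEmpty _
    have hu : (Finset.univ : Finset (Fin (V*0))) = ∅ := Finset.eq_empty_of_isEmpty _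
    simp [emp, hA0, hAc, hu]
  · have hcardc : (Aᶜ).card = (V-1)*m := by
      rw [Finset.card_compl, hA, hm, Fintype.card_fin]
      have : 1 ≤ V := by omega
      rw [Nat.sub_mul, one_mul]
    have hsumc : ∑ i ∈ Aᶜ, f (ξ i) = ∑ i, f (ξ i) - ∑ i ∈ A, f (ξ i) := by
      have h := Finset.sum_add_sum_compl A (fun i => f (ξ i))
      linarith
    simp only [emp, hA, hm, hcardc, Finset.card_univ, Fintype.card_fin, hsumc]
    have hm' : (m:ℝ) ≠ 0 := Nat.cast_ne_zero.2 (by omega)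
    have hV2 : (2:ℝ) ≤ (V:ℝ) := by exact_mod_cast hV
    have hV1 : ((V:ℝ)-1) ≠ 0 := by linarith
    have hV0 : ((V:ℝ)) ≠ 0 := by linarith
    have hcast : (((V-1)*m : ℕ):ℝ) = ((V:ℝ)-1)*(m:ℝ) := by
      have : 1 ≤ V := by omega
      push_cast [Nat.cast_sub this]
      ring
    rw [hcast]
    have hcast2 : ((V*m : ℕ):ℝ) = (V:ℝ)*(m:ℝ) := by push_cast; ring
    rw [hcast2]
    field_simp
    ring

/-- Under the regular partition assumption, bias-corrected `V`-fold cross-validation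
equals the empirical risk plus the `V`-fold penalty with constant `x = V − 1`. -/
theorem stmt3 {X : Type*} {n V : ℕ} (hV : 2 ≤ V) (hVn : V ∣ n)
    {Λ : Type*} [Fintype Λ] (ψ : Λ → X → ℝ) (ξ : Fin n → X)
    (B : Fin V → Finset (Fin n))
    (hdisj : ∀ K K', K ≠ K' → Disjoint (B K) (B K'))
    (hcover : ∀ i, ∃ K, i ∈ B K)
    (hcard : ∀ K, (B K).card = n / V) :
    let α : Finset (Fin n) → Λ → ℝ := fun A l => emp ξ A (ψ l)
    let critVF : ℝ := (V : ℝ)⁻¹ * ∑ K, empRisk ψ ξ (B K) (α (B K)ᶜ)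
    let critcorr : ℝ := critVF + empRisk ψ ξ Finset.univ (α Finset.univ)
      - (V : ℝ)⁻¹ * ∑ K, empRisk ψ ξ Finset.univ (α (B K)ᶜ)
    let penVF : ℝ → ℝ := fun x =>
      (x / V) * ∑ K, (empRisk ψ ξ Finset.univ (α (B K)ᶜ) - empRisk ψ ξ (B K)ᶜ (α (B K)ᶜ))
    critcorr = empRisk ψ ξ Finset.univ (α Finset.univ) + penVF ((V : ℝ) - 1) := by
  intro α critVF critcorr penVF
  have hK : ∀ K : Fin V,
      empRisk ψ ξ (B K) (α (B K)ᶜ) - empRisk ψ ξ Finset.univ (α (B K)ᶜ)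
        = ((V:ℝ)-1) * (empRisk ψ ξ Finset.univ (α (B K)ᶜ)
            - empRisk ψ ξ (B K)ᶜ (α (B K)ᶜ)) := by
    intro K
    set t := α (B K)ᶜ with ht
    have expand : ∀ (A A' : Finset (Fin n)),
        empRisk ψ ξ A t - empRisk ψ ξ A' t
          = -2 * ∑ l, t l * (emp ξ A (ψ l) - emp ξ A' (ψ l)) := by
      intro A A'
      have hd : ∑ l, t l * (emp ξ A (ψ l) - emp ξ A' (ψ l))
          = ∑ l, t l * emp ξ A (ψ l) - ∑ l, t l * emp ξ A' (ψ l) := by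
        rw [← Finset.sum_sub_distrib]
        exact Finset.sum_congr rfl fun l _ => by ring
      simp only [empRisk]
      rw [hd]
      ring
    rw [expand, expand]
    have h1 : ∀ l : Λ, t l * (emp ξ (B K) (ψ l) - emp ξ Finset.univ (ψ l))
        = ((V:ℝ)-1) * (t l * (emp ξ Finset.univ (ψ l) - emp ξ (B K)ᶜ (ψ l))) := by
      intro l
      rw [emp_key hV hVn ξ (B K) (hcard K) (ψ l)]
      ring
    rw [Finset.sum_congr rfl (fun l _ => h1 l), ← Finset.mul_sum]
    ring
  have hsum : ∑ K, empRisk ψ ξ (B K) (α (B K)ᶜ)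
      - ∑ K, empRisk ψ ξ Finset.univ (α (B K)ᶜ)
      = ((V:ℝ)-1) * ∑ K, (empRisk ψ ξ Finset.univ (α (B K)ᶜ)
          - empRisk ψ ξ (B K)ᶜ (α (B K)ᶜ)) := by
    rw [← Finset.sum_sub_distrib, Finset.mul_sum]
    exact Finset.sum_congr rfl fun K _ => hK K
  show critVF + _ - _ = _
  simp only [critVF, critcorr, penVF]
  have hV0 : (V:ℝ) ≠ 0 := by positivity -- wrong if V could be 0? V≥2
  linear_combination (V:ℝ)⁻¹ * hsum
end

section
/- Under the regular partition assumption, the V-fold cross-validation criterion equals the empirical risk plus the V-fold penalty with constant x = V − 1/2: critVF(m,B) = P_n γ(ŝ_m) + pen_VF(m, B, V − 1/2). -/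
open Finset

/-- Key algebraic identity: if `c K = V·b − (V−1)·a K` pointwise and `∑ K, a K = V·b`,
then the V-fold identity holds. -/
lemma key_alg {Λ : Type*} [Fintype Λ] {V : ℕ} (hV : 2 ≤ V)
    (a c : Fin V → Λ → ℝ) (b : Λ → ℝ)
    (h1 : ∀ K l, c K l = (V : ℝ) * b l - ((V : ℝ) - 1) * a K l)
    (h2 : ∀ l, ∑ K, a K l = (V : ℝ) * b l) :
    (V : ℝ)⁻¹ * ∑ K, (∑ l, (a K l) ^ 2 - 2 * ∑ l, a K l * c K l)
      = (∑ l, (b l) ^ 2 - 2 * ∑ l, b l * b l)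
        + (((V : ℝ) - 1 / 2) / V) *
          ∑ K, ((∑ l, (a K l) ^ 2 - 2 * ∑ l, a K l * b l)
            - (∑ l, (a K l) ^ 2 - 2 * ∑ l, a K l * a K l)) := by
  have hVne : (V : ℝ) ≠ 0 := Nat.cast_ne_zero.mpr (by omega)
  have hu : ∑ K, ∑ l, a K l * b l = (V : ℝ) * ∑ l, (b l) ^ 2 := by
    rw [Finset.sum_comm, Finset.mul_sum]
    refine Finset.sum_congr rfl fun l _ => ?_
    rw [← Finset.sum_mul, h2]; ring
  have hc' : ∀ K, ∑ l, a K l * c K l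
      = (V : ℝ) * (∑ l, a K l * b l) - ((V : ℝ) - 1) * ∑ l, (a K l) ^ 2 := by
    intro K
    rw [Finset.mul_sum, Finset.mul_sum, ← Finset.sum_sub_distrib]
    exact Finset.sum_congr rfl fun l _ => by rw [h1]; ring
  have hL : ∑ K, (∑ l, (a K l) ^ 2 - 2 * ∑ l, a K l * c K l)
      = (2 * (V : ℝ) - 1) * (∑ K, ∑ l, (a K l) ^ 2) - 2 * (V : ℝ) * ∑ K, ∑ l, a K l * b l := by
    rw [Finset.mul_sum, Finset.mul_sum, ← Finset.sum_sub_distrib]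
    exact Finset.sum_congr rfl fun K _ => by rw [hc' K]; ring
  have hR : ∑ K, ((∑ l, (a K l) ^ 2 - 2 * ∑ l, a K l * b l)
        - (∑ l, (a K l) ^ 2 - 2 * ∑ l, a K l * a K l))
      = 2 * (∑ K, ∑ l, (a K l) ^ 2) - 2 * ∑ K, ∑ l, a K l * b l := by
    rw [Finset.mul_sum, Finset.mul_sum, ← Finset.sum_sub_distrib]
    refine Finset.sum_congr rfl fun K _ => ?_
    have : ∑ l, a K l * a K l = ∑ l, (a K l) ^ 2 :=
      Finset.sum_congr rfl fun l _ => (sq _).symm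
    rw [this]; ring
  have hbb : ∑ l, b l * b l = ∑ l, (b l) ^ 2 :=
    Finset.sum_congr rfl fun l _ => (sq _).symm
  rw [hL, hR, hbb, hu]
  field_simp
  ring

/-- Under the regular partition assumption, the `V`-fold cross-validation criterion
equals the empirical risk plus the `V`-fold penalty with constant `x = V − 1/2`. -/
theorem stmt4 {X : Type*} {n V : ℕ} (hV : 2 ≤ V) (hVn : V ∣ n)
    {Λ : Type*} [Fintype Λ] (ψ : Λ → X → ℝ) (ξ : Fin n → X)
    (B : Fin V → Finset (Fin n))
    (hdisj : ∀ K K', K ≠ K' → Disjoint (B K) (B K'))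
    (hcover : ∀ i, ∃ K, i ∈ B K)
    (hcard : ∀ K, (B K).card = n / V) :
    let α : Finset (Fin n) → Λ → ℝ := fun A l => emp ξ A (ψ l)
    let critVF : ℝ := (V : ℝ)⁻¹ * ∑ K, empRisk ψ ξ (B K) (α (B K)ᶜ)
    let penVF : ℝ → ℝ := fun x =>
      (x / V) * ∑ K, (empRisk ψ ξ Finset.univ (α (B K)ᶜ) - empRisk ψ ξ (B K)ᶜ (α (B K)ᶜ))
    critVF = empRisk ψ ξ Finset.univ (α Finset.univ) + penVF ((V : ℝ) - 1 / 2) := by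
  intro α critVF penVF
  by_cases hn0 : n = 0
  · subst hn0
    have hA : ∀ A : Finset (Fin 0), A = ∅ := fun A => Finset.eq_empty_of_isEmpty A
    simp [critVF, penVF, α, empRisk, emp, hA]
  -- main case
  have hnpos : 0 < n := Nat.pos_of_ne_zero hn0
  have hVpos : 0 < V := by omega
  set p := n / V with hp
  have hnp : n = V * p := by rw [hp, Nat.mul_div_cancel' hVn]
  have hppos : 0 < p := Nat.div_pos (Nat.le_of_dvd hnpos hVn) hVpos
  have hple : p ≤ n := Nat.div_le_self n V
  have hcardc : ∀ K, ((B K)ᶜ).card = n - p := by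
    intro K
    rw [Finset.card_compl, hcard K, Fintype.card_fin]
  have hmr : ((n - p : ℕ) : ℝ) = (p : ℝ) * ((V : ℝ) - 1) := by
    rw [Nat.cast_sub hple]
    rw [show ((n : ℕ) : ℝ) = ((V : ℕ) : ℝ) * ((p : ℕ) : ℝ) by
      exact_mod_cast congrArg (Nat.cast (R := ℝ)) hnp]
    ring
  have hnr : ((n : ℕ) : ℝ) = (V : ℝ) * (p : ℝ) := by
    exact_mod_cast congrArg (Nat.cast (R := ℝ)) hnp
  have hpr : (p : ℝ) ≠ 0 := Nat.cast_ne_zero.mpr (by omega)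
  have hV1 : (V : ℝ) - 1 ≠ 0 := by
    have : (2 : ℝ) ≤ (V : ℝ) := by exact_mod_cast hV
    linarith
  have hunion : Finset.univ.biUnion B = Finset.univ := by
    apply Finset.eq_univ_of_forall
    intro i
    rcases hcover i with ⟨K, hK⟩
    exact Finset.mem_biUnion.mpr ⟨K, Finset.mem_univ K, hK⟩
  have hpartition : ∀ f : Fin n → ℝ, ∑ K, ∑ i ∈ B K, f i = ∑ i, f i := by
    intro f
    rw [← Finset.sum_biUnion (fun K _ K' _ h => hdisj K K' h), hunion]
  have hcompl : ∀ (K) (f : Fin n → ℝ), ∑ i ∈ (B K)ᶜ, f i = ∑ i, f i - ∑ i ∈ B K, f i := by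
    intro K f
    have := Finset.sum_add_sum_compl (B K) f
    linarith
  have h1 : ∀ K l, emp ξ (B K) (ψ l)
      = (V : ℝ) * emp ξ Finset.univ (ψ l) - ((V : ℝ) - 1) * emp ξ (B K)ᶜ (ψ l) := by
    intro K l
    simp only [emp, hcard K, hcardc K, Finset.card_univ, Fintype.card_fin, hcompl K]
    rw [hmr, hnr]
    field_simp
    ring
  have h2 : ∀ l, ∑ K, emp ξ (B K)ᶜ (ψ l) = (V : ℝ) * emp ξ Finset.univ (ψ l) := by
    intro l
    simp only [emp, hcardc, Finset.card_univ, Fintype.card_fin, hcompl]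
    rw [← Finset.mul_sum, Finset.sum_sub_distrib, Finset.sum_const, Finset.card_univ,
        Fintype.card_fin, nsmul_eq_mul, hpartition (fun i => ψ l (ξ i)), hmr, hnr]
    field_simp
  have key := key_alg hV (fun K l => emp ξ (B K)ᶜ (ψ l)) (fun K l => emp ξ (B K) (ψ l))
    (fun l => emp ξ Finset.univ (ψ l)) h1 h2
  simpa only [critVF, penVF, α, empRisk] using key
end

section
/- Let E be a set of subsets of {1,…,n} such that every A ∈ E has |A| = p and |E|⁻¹ ∑_{A∈E} P_n^{(A^c)} = P_n. Then the associated cross-validation criterion satisfies crit_E(m) = P_n γ(ŝ_m) + pen_E(m, n/p − 1/2), where pen_E(m,C) = (C/|E|)∑_{A∈E}(P_n − P_n^{(A^c)})γ(ŝ_m^{(A^c)}) and crit_E(m) = |E|⁻¹∑_{A∈E} P_n^{(A)}γ(ŝ_m^{(A^c)}). -/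
open Finset

/-- If `E` is a family of subsets of `{1,…,n}`, all of cardinality `p`, whose
associated empirical measures on complements average to `P_n`, then the associated
cross-validation criterion equals the empirical risk plus the associated penalty
with constant `n/p − 1/2`. -/
theorem stmt5 {X : Type*} {n p : ℕ} (hp : 1 ≤ p) (hpn : p ≤ n - 1)
    {Λ : Type*} [Fintype Λ] (ψ : Λ → X → ℝ) (ξ : Fin n → X)
    (E : Finset (Finset (Fin n))) (hE : E.Nonempty)
    (hEcard : ∀ A ∈ E, A.card = p)
    (havg : ∀ f : X → ℝ,
      (E.card : ℝ)⁻¹ * ∑ A ∈ E, emp ξ Aᶜ f = emp ξ Finset.univ f) :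
    let α : Finset (Fin n) → Λ → ℝ := fun A l => emp ξ A (ψ l)
    let critE : ℝ := (E.card : ℝ)⁻¹ * ∑ A ∈ E, empRisk ψ ξ A (α Aᶜ)
    let penE : ℝ → ℝ := fun C =>
      (C / E.card) * ∑ A ∈ E, (empRisk ψ ξ Finset.univ (α Aᶜ) - empRisk ψ ξ Aᶜ (α Aᶜ))
    critE = empRisk ψ ξ Finset.univ (α Finset.univ) + penE ((n : ℝ) / p - 1 / 2) := by
  intro α critE penE
  have hn2 : 2 ≤ n := by omega
  have hpn' : p ≤ n := by omega
  have hp0 : (p : ℝ) ≠ 0 := by positivity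
  have hn0 : (n : ℝ) ≠ 0 := by positivity
  have hnp0 : (n : ℝ) - p ≠ 0 := by
    have : (p : ℝ) < n := by exact_mod_cast (by omega : p < n)
    linarith
  have he0 : (E.card : ℝ) ≠ 0 := by
    have := hE.card_pos
    positivity
  -- abbreviations
  set u : Λ → ℝ := fun l => emp ξ Finset.univ (ψ l) with hu
  set c : Finset (Fin n) → Λ → ℝ := fun A l => emp ξ Aᶜ (ψ l) with hc
  set Q : Finset (Fin n) → ℝ := fun A => ∑ l, (c A l) ^ 2 with hQ
  set R : Finset (Fin n) → ℝ := fun A => ∑ l, c A l * u l with hR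
  set U : ℝ := ∑ l, (u l) ^ 2 with hU
  -- key relation between emp on A, univ, and Aᶜ
  have hA : ∀ A ∈ E, ∀ l, emp ξ A (ψ l) =
      (p : ℝ)⁻¹ * ((n : ℝ) * u l - ((n : ℝ) - p) * c A l) := by
    intro A hAE l
    simp only [hu, hc, emp, card_univ, Fintype.card_fin, card_compl, hEcard A hAE]
    have hsum : ∑ i ∈ A, ψ l (ξ i) = ∑ i, ψ l (ξ i) - ∑ i ∈ Aᶜ, ψ l (ξ i) := by
      rw [← Finset.sum_add_sum_compl A fun i => ψ l (ξ i)]; ring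
    rw [hsum, Nat.cast_sub hpn']
    field_simp
  -- average of R over E
  have hRsum : ∑ A ∈ E, R A = E.card * U := by
    simp only [hR, hU]
    rw [Finset.sum_comm]
    rw [Finset.mul_sum]
    refine Finset.sum_congr rfl fun l _ => ?_
    have h2 : ∑ A ∈ E, c A l = E.card * u l := by
      show ∑ A ∈ E, emp ξ Aᶜ (ψ l) = E.card * emp ξ Finset.univ (ψ l)
      rw [← havg (ψ l), mul_inv_cancel_left₀ he0]
    rw [← Finset.sum_mul, h2]
    ring
  -- rewrite the sum in critE
  have hL : ∑ A ∈ E, empRisk ψ ξ A (α Aᶜ) =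
      (2 * n / p - 1) * (∑ A ∈ E, Q A) - (2 * n / p) * (E.card * U) := by
    rw [← hRsum, Finset.mul_sum, Finset.mul_sum, ← Finset.sum_sub_distrib]
    refine Finset.sum_congr rfl fun A hAE => ?_
    have h1 : ∑ l, α Aᶜ l * emp ξ A (ψ l)
        = (p : ℝ)⁻¹ * ((n : ℝ) * R A - ((n : ℝ) - p) * Q A) := by
      simp only [hR, hQ, Finset.mul_sum, ← Finset.sum_sub_distrib]
      refine Finset.sum_congr rfl fun l _ => ?_
      rw [hA A hAE l]
      simp only [α, hc]
      ring
    rw [empRisk, h1]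
    simp only [α, hc, hQ]
    field_simp
    ring
  -- rewrite the penalty sum
  have hP : ∑ A ∈ E, (empRisk ψ ξ Finset.univ (α Aᶜ) - empRisk ψ ξ Aᶜ (α Aᶜ)) =
      2 * (∑ A ∈ E, Q A) - 2 * (E.card * U) := by
    rw [← hRsum, Finset.mul_sum, Finset.mul_sum, ← Finset.sum_sub_distrib]
    refine Finset.sum_congr rfl fun A hAE => ?_
    simp only [empRisk, α, hc, hQ, hR, hu, pow_two]
    ring
  have hemp : empRisk ψ ξ Finset.univ (α Finset.univ) = -U := by
    simp only [empRisk, α, hu, hU, pow_two]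
    ring
  simp only [critE, penE, hL, hP, hemp]
  field_simp
  ring
end

section
/- The leave-p-out cross-validation criterion can be rewritten as crit_LPO(m,p) = [n(n−p)]⁻¹ ∑_{λ∈Λ_m} ( ∑_{i=1}^n ψ_λ(ξ_i)² − (n−p+1)/(n−1) ∑_{i≠j} ψ_λ(ξ_i)ψ_λ(ξ_j) ), and consequently crit_LPO(m,p) − P_nγ(ŝ_m) = (2n−p)/(n²(n−p)) ∑_{λ∈Λ_m} ( ∑_i ψ_λ(ξ_i)² − (n−1)⁻¹∑_{i≠j}ψ_λ(ξ_i)ψ_λ(ξ_j) ). -/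
open Finset

private lemma filter_not_mem_powersetCard {ι : Type*} [DecidableEq ι] (s : Finset ι) (i : ι)
    (p : ℕ) :
    (s.powersetCard p).filter (fun A => i ∉ A) = (s.erase i).powersetCard p := by
  ext A
  simp only [Finset.mem_filter, Finset.mem_powersetCard, Finset.subset_erase]
  tauto

private lemma count_not {ι : Type*} [Fintype ι] [DecidableEq ι] (p : ℕ) (i : ι) :
    (((univ : Finset ι).powersetCard p).filter (fun A => i ∉ A)).card
      = (Fintype.card ι - 1).choose p := by
  rw [filter_not_mem_powersetCard, Finset.card_powersetCard,
    Finset.card_erase_of_mem (mem_univ i), Finset.card_univ]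

private lemma count_not_not {ι : Type*} [Fintype ι] [DecidableEq ι] (p : ℕ) {i j : ι}
    (hij : i ≠ j) :
    (((univ : Finset ι).powersetCard p).filter (fun A => i ∉ A ∧ j ∉ A)).card
      = (Fintype.card ι - 2).choose p := by
  have h : ((univ : Finset ι).powersetCard p).filter (fun A => i ∉ A ∧ j ∉ A)
      = (((univ : Finset ι).erase i).erase j).powersetCard p := by
    rw [← Finset.filter_filter, filter_not_mem_powersetCard, filter_not_mem_powersetCard]
  rw [h, Finset.card_powersetCard, Finset.card_erase_of_mem
    (Finset.mem_erase.mpr ⟨hij.symm, mem_univ j⟩),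
    Finset.card_erase_of_mem (mem_univ i), Finset.card_univ]
  congr 1

private lemma count_cross {ι : Type*} [Fintype ι] [DecidableEq ι] (p : ℕ) {i j : ι}
    (hij : i ≠ j) :
    (((univ : Finset ι).powersetCard p).filter (fun A => i ∉ A ∧ j ∈ A)).card
      + (Fintype.card ι - 2).choose p = (Fintype.card ι - 1).choose p := by
  have h := Finset.card_filter_add_card_filter_not
    (s := ((univ : Finset ι).powersetCard p).filter (fun A => i ∉ A))
    (p := fun A => j ∈ A)
  rw [Finset.filter_filter, Finset.filter_filter, count_not] at h
  rw [← h, ← count_not_not p hij]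

private lemma swap_count {ι : Type*} [Fintype ι] [DecidableEq ι] (E : Finset (Finset ι))
    (σ τ : Finset ι → Finset ι) (a : ι → ℝ) :
    ∑ A ∈ E, (∑ i ∈ σ A, a i) * (∑ j ∈ τ A, a j)
    = ∑ i, ∑ j, (a i * a j) *
        ((E.filter (fun A => i ∈ σ A ∧ j ∈ τ A)).card : ℝ) := by
  have h : ∀ (t : Finset ι), ∑ i ∈ t, a i = ∑ i, if i ∈ t then a i else 0 := by
    intro t; rw [Finset.sum_ite_mem, Finset.univ_inter]
  simp_rw [h, Finset.sum_mul_sum, Finset.card_filter]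
  push_cast
  rw [Finset.sum_comm]
  refine Finset.sum_congr rfl fun i _ => ?_
  rw [Finset.sum_comm]
  refine Finset.sum_congr rfl fun j _ => ?_
  rw [Finset.mul_sum]
  refine Finset.sum_congr rfl fun A _ => ?_
  by_cases hP : i ∈ σ A <;> by_cases hQ : j ∈ τ A <;> simp [hP, hQ]

private lemma sq_sum_split {ι : Type*} [Fintype ι] [DecidableEq ι] (a : ι → ℝ) :
    (∑ i, a i)^2 = ∑ i, (a i)^2 + ∑ i, ∑ j ∈ univ.erase i, a i * a j := by
  rw [sq, Finset.sum_mul_sum, ← Finset.sum_add_distrib]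
  refine Finset.sum_congr rfl fun i _ => ?_
  rw [← Finset.add_sum_erase _ _ (mem_univ i), sq]

private lemma sumA_cc {ι : Type*} [Fintype ι] [DecidableEq ι] (p : ℕ) (a : ι → ℝ) :
    ∑ A ∈ (univ : Finset ι).powersetCard p, (∑ i ∈ Aᶜ, a i) * (∑ j ∈ Aᶜ, a j)
    = ((Fintype.card ι - 1).choose p : ℝ) * ∑ i, (a i)^2
      + ((Fintype.card ι - 2).choose p : ℝ) * ∑ i, ∑ j ∈ univ.erase i, a i * a j := by
  rw [swap_count]
  simp only [Finset.mem_compl]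
  have hd : ∀ i : ι, ∑ j, (a i * a j) *
        (((((univ : Finset ι).powersetCard p)).filter (fun A => i ∉ A ∧ j ∉ A)).card : ℝ)
      = (a i)^2 * ((Fintype.card ι - 1).choose p : ℝ)
        + ∑ j ∈ univ.erase i, (a i * a j) * ((Fintype.card ι - 2).choose p : ℝ) := by
    intro i
    rw [← Finset.add_sum_erase _ _ (mem_univ i)]
    congr 1
    · have h2 : ((univ : Finset ι).powersetCard p).filter (fun A => i ∉ A ∧ i ∉ A)
          = ((univ : Finset ι).powersetCard p).filter (fun A => i ∉ A) := by
        simp only [and_self]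
      rw [h2, count_not]; ring
    · refine Finset.sum_congr rfl fun j hj => ?_
      rw [count_not_not p (Ne.symm (Finset.mem_erase.mp hj).1)]
  rw [Finset.sum_congr rfl fun i _ => hd i, Finset.sum_add_distrib]
  congr 1
  · rw [Finset.mul_sum]; exact Finset.sum_congr rfl fun i _ => (mul_comm _ _)
  · rw [Finset.mul_sum]
    refine Finset.sum_congr rfl fun i _ => ?_
    rw [Finset.mul_sum]
    exact Finset.sum_congr rfl fun j _ => (mul_comm _ _)

private lemma sumA_ci {ι : Type*} [Fintype ι] [DecidableEq ι] (p : ℕ) (a : ι → ℝ) :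
    ∑ A ∈ (univ : Finset ι).powersetCard p, (∑ i ∈ Aᶜ, a i) * (∑ j ∈ A, a j)
    = (((Fintype.card ι - 1).choose p : ℝ) - ((Fintype.card ι - 2).choose p : ℝ)) *
        ∑ i, ∑ j ∈ univ.erase i, a i * a j := by
  rw [swap_count ((univ : Finset ι).powersetCard p) (fun A => Aᶜ) (fun A => A) a]
  simp only [Finset.mem_compl]
  have hd : ∀ i : ι, ∑ j, (a i * a j) *
        (((((univ : Finset ι).powersetCard p)).filter (fun A => i ∉ A ∧ j ∈ A)).card : ℝ)
      = ∑ j ∈ univ.erase i, (a i * a j) *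
          (((Fintype.card ι - 1).choose p : ℝ) - ((Fintype.card ι - 2).choose p : ℝ)) := by
    intro i
    rw [← Finset.add_sum_erase _ _ (mem_univ i)]
    have h0 : ((univ : Finset ι).powersetCard p).filter (fun A => i ∉ A ∧ i ∈ A) = ∅ := by
      apply Finset.filter_eq_empty_iff.mpr
      intro A _
      tauto
    rw [h0]
    simp only [Finset.card_empty, Nat.cast_zero, mul_zero, zero_add]
    refine Finset.sum_congr rfl fun j hj => ?_
    congr 1
    have h := count_cross p (Ne.symm (Finset.mem_erase.mp hj).1)
    have h' : ((((univ : Finset ι).powersetCard p).filter (fun A => i ∉ A ∧ j ∈ A)).card : ℝ)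
        + ((Fintype.card ι - 2).choose p : ℝ) = ((Fintype.card ι - 1).choose p : ℝ) := by
      exact_mod_cast congrArg (Nat.cast : ℕ → ℝ) h
    linarith
  rw [Finset.sum_congr rfl fun i _ => hd i, Finset.mul_sum]
  refine Finset.sum_congr rfl fun i _ => ?_
  rw [Finset.mul_sum]
  exact Finset.sum_congr rfl fun j _ => (mul_comm _ _)

/-- Closed-form expression of the leave-`p`-out criterion and of its difference
with the empirical risk. -/
theorem stmt6 {X : Type*} {n p : ℕ} (hn : 2 ≤ n) (hp : 1 ≤ p) (hpn : p ≤ n - 1)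
    {Λ : Type*} [Fintype Λ] (ψ : Λ → X → ℝ) (ξ : Fin n → X) :
    let Ep : Finset (Finset (Fin n)) := Finset.powersetCard p Finset.univ
    let α : Finset (Fin n) → Λ → ℝ := fun A l => emp ξ A (ψ l)
    let critLPO : ℝ := (Ep.card : ℝ)⁻¹ * ∑ A ∈ Ep, empRisk ψ ξ A (α Aᶜ)
    let S1 : Λ → ℝ := fun l => ∑ i, (ψ l (ξ i)) ^ 2
    let S2 : Λ → ℝ := fun l => ∑ i, ∑ j ∈ Finset.univ.erase i, ψ l (ξ i) * ψ l (ξ j)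
    critLPO = ((n : ℝ) * ((n : ℝ) - p))⁻¹ *
        ∑ l, (S1 l - (((n : ℝ) - p + 1) / ((n : ℝ) - 1)) * S2 l) ∧
    critLPO - empRisk ψ ξ Finset.univ (α Finset.univ)
      = ((2 * (n : ℝ) - p) / ((n : ℝ) ^ 2 * ((n : ℝ) - p))) *
        ∑ l, (S1 l - ((n : ℝ) - 1)⁻¹ * S2 l) := by
  intro Ep α critLPO S1 S2
  have hpn' : p ≤ n := by omega
  have hN0 : (0:ℝ) < (n:ℝ) := by exact_mod_cast (by omega : 0 < n)
  have hP0 : (0:ℝ) < (p:ℝ) := by exact_mod_cast hp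
  have hq0 : (0:ℝ) < (n:ℝ) - p := by
    have : (p:ℝ) < (n:ℝ) := by exact_mod_cast (by omega : p < n)
    linarith
  have hN1 : (0:ℝ) < (n:ℝ) - 1 := by
    have : (1:ℝ) < (n:ℝ) := by exact_mod_cast (by omega : 1 < n)
    linarith
  have hC0 : (0:ℝ) < (n.choose p : ℝ) := by exact_mod_cast Nat.choose_pos hpn'
  -- choose identities
  have e1 : (n-1).choose p * n = n.choose p * (n - p) := by
    have h := Nat.choose_mul_succ_eq (n-1) p
    have h' : n - 1 + 1 = n := by omega
    rwa [h'] at h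
  have e2 : (n-2).choose p * (n-1) = (n-1).choose p * (n - 1 - p) := by
    have h := Nat.choose_mul_succ_eq (n-2) p
    have h' : n - 2 + 1 = n - 1 := by omega
    rwa [h'] at h
  have hch1 : ((n-1).choose p : ℝ) = ((n:ℝ) - p) * (n.choose p : ℝ) / n := by
    have h := congrArg (Nat.cast : ℕ → ℝ) e1
    push_cast [Nat.cast_sub hpn'] at h
    field_simp
    linarith
  have hch2 : ((n-2).choose p : ℝ) = ((n:ℝ) - 1 - p) * ((n-1).choose p : ℝ) / ((n:ℝ) - 1) := by
    have h := congrArg (Nat.cast : ℕ → ℝ) e2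
    push_cast [Nat.cast_sub hpn, Nat.cast_sub (by omega : 1 ≤ n)] at h
    field_simp
    linarith
  -- basic cards
  have hcard : (Ep.card : ℝ) = (n.choose p : ℝ) := by
    simp [Ep, Finset.card_powersetCard]
  have hcompl : ∀ A ∈ Ep, ((Aᶜ : Finset (Fin n)).card : ℝ) = (n:ℝ) - p := by
    intro A hA
    have hA' : A.card = p := (Finset.mem_powersetCard.mp hA).2
    rw [Finset.card_compl, hA', Fintype.card_fin, Nat.cast_sub hpn']
  -- per-l sums
  have h1 : ∀ l, ∑ A ∈ Ep, (α Aᶜ l)^2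
      = (((n:ℝ)-p)⁻¹)^2 * (((n-1).choose p : ℝ) * S1 l + ((n-2).choose p : ℝ) * S2 l) := by
    intro l
    have hterm : ∀ A ∈ Ep, (α Aᶜ l)^2
        = (((n:ℝ)-p)⁻¹)^2 * ((∑ i ∈ Aᶜ, ψ l (ξ i)) * (∑ j ∈ Aᶜ, ψ l (ξ j))) := by
      intro A hA
      simp only [α, emp]
      rw [hcompl A hA]
      ring
    rw [Finset.sum_congr rfl hterm, ← Finset.mul_sum]
    have := sumA_cc (ι := Fin n) p (fun i => ψ l (ξ i))
    rw [Fintype.card_fin] at this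
    rw [this]
  have h2 : ∀ l, ∑ A ∈ Ep, α Aᶜ l * emp ξ A (ψ l)
      = (((n:ℝ)-p)⁻¹ * ((p:ℝ))⁻¹) *
        ((((n-1).choose p : ℝ) - ((n-2).choose p : ℝ)) * S2 l) := by
    intro l
    have hterm : ∀ A ∈ Ep, α Aᶜ l * emp ξ A (ψ l)
        = (((n:ℝ)-p)⁻¹ * ((p:ℝ))⁻¹) * ((∑ i ∈ Aᶜ, ψ l (ξ i)) * (∑ j ∈ A, ψ l (ξ j))) := by
      intro A hA
      have hA' : A.card = p := (Finset.mem_powersetCard.mp hA).2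
      simp only [α, emp]
      rw [hcompl A hA, hA']
      ring
    rw [Finset.sum_congr rfl hterm, ← Finset.mul_sum]
    have := sumA_ci (ι := Fin n) p (fun i => ψ l (ξ i))
    rw [Fintype.card_fin] at this
    rw [this]
  -- total sum over A
  have hsum : ∑ A ∈ Ep, empRisk ψ ξ A (α Aᶜ)
      = ∑ l, ((((n:ℝ)-p)⁻¹)^2 * (((n-1).choose p : ℝ) * S1 l + ((n-2).choose p : ℝ) * S2 l)
          - 2 * ((((n:ℝ)-p)⁻¹ * ((p:ℝ))⁻¹) *
              ((((n-1).choose p : ℝ) - ((n-2).choose p : ℝ)) * S2 l))) := by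
    simp only [empRisk]
    rw [Finset.sum_sub_distrib, ← Finset.mul_sum, Finset.sum_comm,
      Finset.sum_comm (s := Ep)]
    rw [Finset.sum_congr rfl fun l _ => h1 l, Finset.sum_congr rfl fun l _ => h2 l,
      Finset.mul_sum, ← Finset.sum_sub_distrib]
  have H1 : critLPO = ((n : ℝ) * ((n : ℝ) - p))⁻¹ *
      ∑ l, (S1 l - (((n : ℝ) - p + 1) / ((n : ℝ) - 1)) * S2 l) := by
    show (Ep.card : ℝ)⁻¹ * ∑ A ∈ Ep, empRisk ψ ξ A (α Aᶜ) = _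
    rw [hsum, hcard, Finset.mul_sum, Finset.mul_sum]
    refine Finset.sum_congr rfl fun l _ => ?_
    rw [hch2, hch1]
    field_simp
    ring
  refine ⟨H1, ?_⟩
  have hEmp : empRisk ψ ξ Finset.univ (α Finset.univ)
      = ∑ l, (-(((n:ℝ)⁻¹)^2 * (S1 l + S2 l))) := by
    simp only [empRisk, α, emp, Finset.card_univ, Fintype.card_fin]
    rw [Finset.mul_sum, ← Finset.sum_sub_distrib]
    refine Finset.sum_congr rfl fun l _ => ?_
    have hs : (∑ i, ψ l (ξ i))^2 = S1 l + S2 l := by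
      simp only [S1, S2]
      exact sq_sum_split _
    calc ((n:ℝ)⁻¹ * ∑ i, ψ l (ξ i))^2
          - 2 * (((n:ℝ)⁻¹ * ∑ i, ψ l (ξ i)) * ((n:ℝ)⁻¹ * ∑ i, ψ l (ξ i)))
        = -(((n:ℝ)⁻¹)^2 * (∑ i, ψ l (ξ i))^2) := by ring
      _ = _ := by rw [hs]
  rw [H1, hEmp, Finset.mul_sum, Finset.mul_sum, ← Finset.sum_sub_distrib]
  refine Finset.sum_congr rfl fun l _ => ?_
  field_simp
  ring
end

section
/- Under the regular partition assumption, E[pen_VF(m, B, V−1)] = E[penid(m)] = 2 E[‖ŝ_m − s_m‖²] = 2 D_m / n, where D_m = P Ψ_m − ‖s_m‖² and Ψ_m = ∑_{λ∈Λ_m} ψ_λ². -/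
open Finset MeasureTheory

/-!
Everything reduces to second moments of empirical means `emp ω A f` of an i.i.d. sample:
distinct coordinates are independent, so `cov(emp A f, emp C f) = #(A ∩ C) / (#A #C) · Var f`.
Per basis function the risk of `ŝ_m` is then `Var/n` and the ideal penalty twice that,
while the `K`-th V-fold term is `2 (1/#(B K)ᶜ − 1/n) Var = 2 Var / ((V − 1) n)`, because
the training set `(B K)ᶜ` has `(V − 1) n / V` points; the factor `(V − 1)/V` times the
`V` blocks cancels the `V − 1`.
-/

open ProbabilityTheory

section Coordinates

variable {X ι : Type*} [MeasurableSpace X] {P : Measure X} [IsProbabilityMeasure P]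
  [Fintype ι] {f : X → ℝ}

lemma memLp_comp_eval (hf : MemLp f 2 P) (i : ι) :
    MemLp (fun ω : ι → X ↦ f (ω i)) 2 (Measure.pi fun _ ↦ P) :=
  hf.comp_measurePreserving (measurePreserving_eval _ i)

lemma covariance_comp_eval_comp_eval [DecidableEq ι] (hf : MemLp f 2 P) (i j : ι) :
    cov[fun ω : ι → X ↦ f (ω i), fun ω ↦ f (ω j); Measure.pi fun _ ↦ P] =
      if i = j then Var[f; P] else 0 := by
  split_ifs with hij
  · subst hij
    rw [covariance_self (memLp_comp_eval hf i).aestronglyMeasurable.aemeasurable]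
    exact (measurePreserving_eval _ i).variance_fun_comp hf.aestronglyMeasurable.aemeasurable
  · exact ((iIndepFun_pi fun _ ↦ hf.aestronglyMeasurable.aemeasurable).indepFun hij
      ).covariance_eq_zero (memLp_comp_eval hf i) (memLp_comp_eval hf j)

lemma covariance_sum_comp_eval [DecidableEq ι] (hf : MemLp f 2 P) (A C : Finset ι) :
    cov[fun ω : ι → X ↦ ∑ i ∈ A, f (ω i), fun ω ↦ ∑ j ∈ C, f (ω j); Measure.pi fun _ ↦ P] =
      #(A ∩ C) * Var[f; P] := by
  rw [covariance_fun_sum_fun_sum' (fun i _ ↦ memLp_comp_eval hf i)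
    (fun j _ ↦ memLp_comp_eval hf j)]
  simp_rw [covariance_comp_eval_comp_eval hf, Finset.sum_ite_eq, Finset.sum_ite_mem,
    Finset.sum_const, nsmul_eq_mul]

end Coordinates

section EmpiricalMean

variable {X : Type*} [MeasurableSpace X] {P : Measure X} [IsProbabilityMeasure P] {n : ℕ}
  {f : X → ℝ} {A C : Finset (Fin n)}

lemma memLp_emp (hf : MemLp f 2 P) (A : Finset (Fin n)) :
    MemLp (fun ω ↦ emp ω A f) 2 (Measure.pi fun _ ↦ P) := by
  simpa only [emp, Finset.sum_apply] using
    (memLp_finsetSum' A fun i _ ↦ memLp_comp_eval hf i).const_mul (#A : ℝ)⁻¹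

lemma memLp_emp_sub_const (hf : MemLp f 2 P) (A : Finset (Fin n)) (a : ℝ) :
    MemLp (fun ω ↦ emp ω A f - a) 2 (Measure.pi fun _ ↦ P) :=
  (memLp_emp hf A).sub (memLp_const a)

lemma integrable_emp_mul (hf : MemLp f 2 P) (A : Finset (Fin n)) {g : (Fin n → X) → ℝ}
    (hg : MemLp g 2 (Measure.pi fun _ ↦ P)) :
    Integrable (fun ω ↦ emp ω A f * g ω) (Measure.pi fun _ ↦ P) :=
  (memLp_emp hf A).integrable_mul hg

lemma integral_emp (hf : MemLp f 2 P) (hA : A.Nonempty) :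
    ∫ ω, emp ω A f ∂(Measure.pi fun _ ↦ P) = ∫ x, f x ∂P := by
  have hA0 : (#A : ℝ) ≠ 0 := by exact_mod_cast hA.card_ne_zero
  simp only [emp]
  rw [integral_const_mul,
    integral_finsetSum _ fun i _ ↦ (memLp_comp_eval hf i).integrable one_le_two,
    Finset.sum_congr rfl fun i _ ↦
    integral_comp_eval (μ := fun _ ↦ P) (i := i) hf.aestronglyMeasurable, Finset.sum_const,
    nsmul_eq_mul]
  field_simp

lemma covariance_emp_emp (hf : MemLp f 2 P) (A C : Finset (Fin n)) :
    cov[fun ω ↦ emp ω A f, fun ω ↦ emp ω C f; Measure.pi fun _ ↦ P] =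
      #(A ∩ C) / (#A * #C) * Var[f; P] := by
  simp only [emp]
  rw [covariance_const_mul_left, covariance_const_mul_right, covariance_sum_comp_eval hf]
  ring

lemma variance_emp (hf : MemLp f 2 P) (hA : A.Nonempty) :
    Var[fun ω ↦ emp ω A f; Measure.pi fun _ ↦ P] = Var[f; P] / #A := by
  have hA0 : (#A : ℝ) ≠ 0 := by exact_mod_cast hA.card_ne_zero
  rw [← covariance_self (memLp_emp hf A).aestronglyMeasurable.aemeasurable, covariance_emp_emp hf,
    Finset.inter_self]
  field_simp

lemma integral_emp_mul_emp (hf : MemLp f 2 P) (hA : A.Nonempty) (hC : C.Nonempty) :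
    ∫ ω, emp ω A f * emp ω C f ∂(Measure.pi fun _ ↦ P) =
      (∫ x, f x ∂P) ^ 2 + #(A ∩ C) / (#A * #C) * Var[f; P] := by
  have h := covariance_eq_sub (memLp_emp hf A) (memLp_emp hf C)
  rw [covariance_emp_emp hf, integral_emp hf hA, integral_emp hf hC] at h
  simp only [Pi.mul_apply] at h
  linarith

lemma integrable_emp_mul_emp_sub_emp (hf : MemLp f 2 P) (A C : Finset (Fin n)) :
    Integrable (fun ω ↦ emp ω C f * (emp ω C f - emp ω A f)) (Measure.pi fun _ ↦ P) :=
  integrable_emp_mul hf C ((memLp_emp hf C).sub (memLp_emp hf A))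

lemma integral_emp_mul_emp_sub_emp (hf : MemLp f 2 P) (hC : C.Nonempty) (hCA : C ⊆ A) :
    ∫ ω, emp ω C f * (emp ω C f - emp ω A f) ∂(Measure.pi fun _ ↦ P) =
      (1 / #C - 1 / #A) * Var[f; P] := by
  have hA := hC.mono hCA
  have hA0 : (#A : ℝ) ≠ 0 := by exact_mod_cast hA.card_ne_zero
  have hC0 : (#C : ℝ) ≠ 0 := by exact_mod_cast hC.card_ne_zero
  simp_rw [mul_sub]
  rw [integral_sub (integrable_emp_mul hf C (memLp_emp hf C))
    (integrable_emp_mul hf C (memLp_emp hf A)), integral_emp_mul_emp hf hC hC,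
    integral_emp_mul_emp hf hC hA, Finset.inter_self, Finset.inter_eq_left.mpr hCA]
  field_simp
  ring

lemma integral_emp_sub_integral_sq (hf : MemLp f 2 P) (hA : A.Nonempty) :
    ∫ ω, (emp ω A f - ∫ x, f x ∂P) ^ 2 ∂(Measure.pi fun _ ↦ P) = Var[f; P] / #A := by
  rw [← variance_emp hf hA, variance_eq_integral (memLp_emp hf A).aestronglyMeasurable.aemeasurable,
    integral_emp hf hA]

lemma integral_emp_mul_emp_sub_integral (hf : MemLp f 2 P) (hA : A.Nonempty) :
    ∫ ω, emp ω A f * (emp ω A f - ∫ x, f x ∂P) ∂(Measure.pi fun _ ↦ P) = Var[f; P] / #A := by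
  have hA0 : (#A : ℝ) ≠ 0 := by exact_mod_cast hA.card_ne_zero
  simp_rw [mul_sub]
  rw [integral_sub (integrable_emp_mul hf A (memLp_emp hf A))
    (integrable_emp_mul hf A (memLp_const _)), integral_mul_const,
    integral_emp_mul_emp hf hA hA, integral_emp hf hA, Finset.inter_self]
  field_simp
  ring

end EmpiricalMean

lemma empRisk_sub_empRisk {X Λ : Type*} [Fintype Λ] {n : ℕ} (ψ : Λ → X → ℝ)
    (ξ : Fin n → X) (A C : Finset (Fin n)) (t : Λ → ℝ) :
    empRisk ψ ξ A t - empRisk ψ ξ C t = 2 * ∑ l, t l * (emp ξ C (ψ l) - emp ξ A (ψ l)) := by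
  simp only [empRisk, mul_sub, Finset.sum_sub_distrib]
  ring

lemma cast_card_compl_of_card_eq_div {n V : ℕ} (hV : 0 < V) (hVn : V ∣ n)
    {B : Finset (Fin n)} (hB : #B = n / V) :
    (#Bᶜ : ℝ) = n * (V - 1) / V := by
  obtain ⟨q, rfl⟩ := hVn
  rw [Finset.card_compl, Fintype.card_fin, hB, Nat.mul_div_cancel_left _ hV,
    Nat.cast_sub (Nat.le_mul_of_pos_left q hV)]
  push_cast
  field_simp

section EmpiricalRisk

variable {X Λ : Type*} [MeasurableSpace X] {P : Measure X} [IsProbabilityMeasure P] [Fintype Λ]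
  {n : ℕ} {ψ : Λ → X → ℝ}

lemma integrable_empRisk_sub_empRisk (hψ : ∀ l, MemLp (ψ l) 2 P) (A C : Finset (Fin n)) :
    Integrable (fun ω ↦ empRisk ψ ω A (fun l ↦ emp ω C (ψ l)) -
      empRisk ψ ω C (fun l ↦ emp ω C (ψ l))) (Measure.pi fun _ ↦ P) := by
  simp_rw [empRisk_sub_empRisk]
  exact (integrable_finsetSum _ fun l _ ↦ integrable_emp_mul_emp_sub_emp (hψ l) A C).const_mul 2

lemma integral_empRisk_sub_empRisk (hψ : ∀ l, MemLp (ψ l) 2 P) {A C : Finset (Fin n)}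
    (hC : C.Nonempty) (hCA : C ⊆ A) :
    ∫ ω, (empRisk ψ ω A (fun l ↦ emp ω C (ψ l)) - empRisk ψ ω C (fun l ↦ emp ω C (ψ l)))
      ∂(Measure.pi fun _ ↦ P) = 2 * (1 / #C - 1 / #A) * ∑ l, Var[ψ l; P] := by
  simp_rw [empRisk_sub_empRisk]
  rw [integral_const_mul,
    integral_finsetSum _ fun l _ ↦ integrable_emp_mul_emp_sub_emp (hψ l) A C]
  simp_rw [integral_emp_mul_emp_sub_emp (hψ _) hC hCA, ← Finset.mul_sum]
  ring

lemma integral_sum_emp_mul_emp_sub_integral (hψ : ∀ l, MemLp (ψ l) 2 P)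
    {A : Finset (Fin n)} (hA : A.Nonempty) :
    ∫ ω, ∑ l, emp ω A (ψ l) * (emp ω A (ψ l) - ∫ x, ψ l x ∂P) ∂(Measure.pi fun _ ↦ P) =
      (∑ l, Var[ψ l; P]) / #A := by
  rw [integral_finsetSum _ fun l _ ↦ integrable_emp_mul (hψ l) A (memLp_emp_sub_const (hψ l) A _),
    Finset.sum_div]
  exact Finset.sum_congr rfl fun l _ ↦ integral_emp_mul_emp_sub_integral (hψ l) hA

lemma integral_sum_emp_sub_integral_sq (hψ : ∀ l, MemLp (ψ l) 2 P)
    {A : Finset (Fin n)} (hA : A.Nonempty) :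
    ∫ ω, ∑ l, (emp ω A (ψ l) - ∫ x, ψ l x ∂P) ^ 2 ∂(Measure.pi fun _ ↦ P) =
      (∑ l, Var[ψ l; P]) / #A := by
  rw [integral_finsetSum _ fun l _ ↦ (memLp_emp_sub_const (hψ l) A _).integrable_sq,
    Finset.sum_div]
  exact Finset.sum_congr rfl fun l _ ↦ integral_emp_sub_integral_sq (hψ l) hA

lemma integral_sum_empRisk_sub_empRisk_compl (hψ : ∀ l, MemLp (ψ l) 2 P) {V : ℕ} (hn : 0 < n)
    (hV : 2 ≤ V) (hVn : V ∣ n) (B : Fin V → Finset (Fin n)) (hcard : ∀ K, #(B K) = n / V) :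
    ∫ ω, ∑ K, (empRisk ψ ω univ (fun l ↦ emp ω (B K)ᶜ (ψ l)) -
        empRisk ψ ω (B K)ᶜ (fun l ↦ emp ω (B K)ᶜ (ψ l))) ∂(Measure.pi fun _ ↦ P) =
      2 * V / ((V - 1) * n) * ∑ l, Var[ψ l; P] := by
  have hV1 : (0 : ℝ) < V - 1 := by
    rw [sub_pos]
    exact_mod_cast hV
  have hcompl : ∀ K, (#(B K)ᶜ : ℝ) = n * (V - 1) / V :=
    fun K ↦ cast_card_compl_of_card_eq_div (by omega) hVn (hcard K)
  have hcompl_ne : ∀ K, (B K)ᶜ.Nonempty := fun K ↦ Finset.card_pos.mp <| by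
    have : (0 : ℝ) < #(B K)ᶜ := by rw [hcompl K]; positivity
    exact_mod_cast this
  rw [integral_finsetSum _ fun K _ ↦ integrable_empRisk_sub_empRisk hψ _ _]
  simp_rw [integral_empRisk_sub_empRisk hψ (hcompl_ne _) (subset_univ _), hcompl,
    Finset.sum_const, card_univ, Fintype.card_fin, nsmul_eq_mul]
  field_simp
  ring

end EmpiricalRisk

theorem stmt8_general {X : Type*} [MeasurableSpace X] (P : Measure X) [IsProbabilityMeasure P]
    {n V : ℕ} (hn : 0 < n) (hV : 2 ≤ V) (hVn : V ∣ n)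
    {Λ : Type*} [Fintype Λ] (ψ : Λ → X → ℝ)
    (hψ : ∀ l, MemLp (ψ l) 2 P)
    (B : Fin V → Finset (Fin n))
    (hcard : ∀ K, (B K).card = n / V) :
    let μn : Measure (Fin n → X) := Measure.pi fun _ => P
    let c : Λ → ℝ := fun l => ∫ x, ψ l x ∂P
    let Dm : ℝ := (∑ l, ∫ x, (ψ l x) ^ 2 ∂P) - ∑ l, (c l) ^ 2
    let α : (Fin n → X) → Finset (Fin n) → Λ → ℝ := fun ξ A l => emp ξ A (ψ l)
    let penVF : (Fin n → X) → ℝ := fun ξ =>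
      (((V : ℝ) - 1) / V) * ∑ K,
        (empRisk ψ ξ Finset.univ (α ξ (B K)ᶜ) - empRisk ψ ξ (B K)ᶜ (α ξ (B K)ᶜ))
    let penid : (Fin n → X) → ℝ := fun ξ =>
      (∑ l, (α ξ Finset.univ l) ^ 2 - 2 * ∑ l, α ξ Finset.univ l * c l)
        - (∑ l, (α ξ Finset.univ l) ^ 2 - 2 * ∑ l, (α ξ Finset.univ l) ^ 2)
    (∫ ω, penVF ω ∂μn) = 2 * Dm / n ∧
    (∫ ω, penid ω ∂μn) = 2 * Dm / n ∧
    2 * (∫ ω, ∑ l, (α ω Finset.univ l - c l) ^ 2 ∂μn) = 2 * Dm / n := by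
  intro μn c Dm α penVF penid
  have hDm : Dm = ∑ l, Var[ψ l; P] := by
    simp only [Dm, c, variance_eq_sub (hψ _), Pi.pow_apply, Finset.sum_sub_distrib]
  have huniv : (univ : Finset (Fin n)).Nonempty := univ_nonempty_iff.2 ⟨⟨0, hn⟩⟩
  have hpenid : penid = fun ω ↦ 2 * ∑ l, emp ω univ (ψ l) * (emp ω univ (ψ l) - c l) := by
    funext ω
    simp only [penid, α, mul_sub, Finset.sum_sub_distrib, Finset.mul_sum, pow_two]
    ring
  refine ⟨?_, ?_, ?_⟩
  · have hV1 : (V : ℝ) - 1 ≠ 0 := by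
      rw [sub_ne_zero]
      exact_mod_cast (by omega : V ≠ 1)
    simp only [penVF, α, μn]
    rw [integral_const_mul, integral_sum_empRisk_sub_empRisk_compl hψ hn hV hVn B hcard, ← hDm]
    field_simp
  · rw [hpenid, integral_const_mul, integral_sum_emp_mul_emp_sub_integral hψ huniv, ← hDm,
      card_univ, Fintype.card_fin, mul_div_assoc]
  · rw [integral_sum_emp_sub_integral_sq hψ huniv, ← hDm, card_univ, Fintype.card_fin,
      mul_div_assoc]

/-- Under the regular partition assumption, for an i.i.d. sample with distribution `P`:
`E[pen_VF(m,B,V−1)] = E[penid(m)] = 2 E[‖ŝ_m − s_m‖²] = 2 D_m / n`, where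
`D_m = P Ψ_m − ‖s_m‖²`. -/
theorem stmt8 {X : Type*} [MeasurableSpace X] (P : Measure X) [IsProbabilityMeasure P]
    {n V : ℕ} (hn : 0 < n) (hV : 2 ≤ V) (hVn : V ∣ n)
    {Λ : Type*} [Fintype Λ] (ψ : Λ → X → ℝ)
    (hψ : ∀ l, MemLp (ψ l) 2 P)
    (B : Fin V → Finset (Fin n))
    (hdisj : ∀ K K', K ≠ K' → Disjoint (B K) (B K'))
    (hcover : ∀ i, ∃ K, i ∈ B K)
    (hcard : ∀ K, (B K).card = n / V) :
    let μn : Measure (Fin n → X) := Measure.pi fun _ => P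
    let c : Λ → ℝ := fun l => ∫ x, ψ l x ∂P
    let Dm : ℝ := (∑ l, ∫ x, (ψ l x) ^ 2 ∂P) - ∑ l, (c l) ^ 2
    let α : (Fin n → X) → Finset (Fin n) → Λ → ℝ := fun ξ A l => emp ξ A (ψ l)
    let penVF : (Fin n → X) → ℝ := fun ξ =>
      (((V : ℝ) - 1) / V) * ∑ K,
        (empRisk ψ ξ Finset.univ (α ξ (B K)ᶜ) - empRisk ψ ξ (B K)ᶜ (α ξ (B K)ᶜ))
    let penid : (Fin n → X) → ℝ := fun ξ =>
      (∑ l, (α ξ Finset.univ l) ^ 2 - 2 * ∑ l, α ξ Finset.univ l * c l)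
        - (∑ l, (α ξ Finset.univ l) ^ 2 - 2 * ∑ l, (α ξ Finset.univ l) ^ 2)
    (∫ ω, penVF ω ∂μn) = 2 * Dm / n ∧
    (∫ ω, penid ω ∂μn) = 2 * Dm / n ∧
    2 * (∫ ω, ∑ l, (α ω Finset.univ l - c l) ^ 2 ∂μn) = 2 * Dm / n :=
  stmt8_general P hn hV hVn ψ hψ B hcard
end

section
/- For histogram models: let m be a regular partition of ℝ with μ(λ) = 1/d_m for all λ ∈ m, and m' a subpartition of m, with ψ_λ = μ(λ)^{−1/2} 1_λ. Then β(Λ_m, Λ_{m'}) = ∑_{λ∈m, λ'∈m'} (E[(ψ_λ(ξ_1)−Pψ_λ)(ψ_{λ'}(ξ_1)−Pψ_{λ'})])² = d_m‖s_{m'}‖² − 2P(s_m s_{m'}) + ‖s_m‖²‖s_{m'}‖². -/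
/-! With `e_λ = ∫_λ s`, the coefficients are `c_λ = √d e_λ` and `c'_λ' = μ(λ')^{-1/2} e_λ'`.
Each cell `λ'` of `m'` lies in a unique cell `λ₀ λ'` of `m`, so `ψ_λ ψ'_λ' = √d [λ = λ₀ λ'] ψ'_λ'`
and the covariance of `ψ_λ(ξ₁)` and `ψ'_λ'(ξ₁)` is `√d c'_λ' [λ = λ₀ λ'] - c_λ c'_λ'`. Squaring and
summing over pairs, the diagonal gives `d ∑ c'²`, the products give `∑ c² ∑ c'²`, and the cross
term is `∑_λ' √d c_{λ₀ λ'} c'_λ'²`, which is `P(s_m s_m')` because `s_m s_m'` equals the constant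
`√d c_{λ₀ λ'} μ(λ')^{-1/2} c'_λ'` on `λ'`. Boundedness of `s` gives `c'_λ'² ≤ ‖s‖_∞ e_λ'`, hence
convergence of `∑ c'²`. -/

open MeasureTheory Function

theorem tsum_sq_ite_graph_sub_mul {Λ Λ' : Type*} [DecidableEq Λ] (f : Λ' → Λ)
    {u : Λ' → ℝ} {c : Λ → ℝ} {c' : Λ' → ℝ} (hu : Summable fun l' => u l' ^ 2)
    (hc : Summable fun l => c l ^ 2) (hc' : Summable fun l' => c' l' ^ 2) :
    ∑' p : Λ × Λ', ((if p.1 = f p.2 then u p.2 else 0) - c p.1 * c' p.2) ^ 2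
      = ∑' l', u l' ^ 2 - 2 * ∑' l', u l' * c (f l') * c' l'
        + (∑' l, c l ^ 2) * ∑' l', c' l' ^ 2 := by
  -- `2|ab| ≤ a² + b²` with `a = u`, `b = c ∘ f * c'`, and `c (f l')² ≤ ∑ c²`
  have hcross : Summable fun l' => u l' * c (f l') * c' l' := by
    refine Summable.of_norm_bounded (hu.add (hc'.mul_left (∑' l, c l ^ 2))) fun l' => ?_
    have hcf : c (f l') ^ 2 ≤ ∑' l, c l ^ 2 :=
      hc.le_tsum (f l') fun l _ => sq_nonneg (c l)
    rw [Real.norm_eq_abs, abs_le]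
    constructor <;> nlinarith [sq_nonneg (u l' + c (f l') * c' l'),
      sq_nonneg (u l' - c (f l') * c' l'), sq_nonneg (c' l'),
      mul_le_mul_of_nonneg_right hcf (sq_nonneg (c' l'))]
  have hgraph : HasSum (fun p : Λ × Λ' => if p.1 = f p.2
      then u p.2 ^ 2 - 2 * (u p.2 * c p.1 * c' p.2) else 0)
      (∑' l', u l' ^ 2 - 2 * ∑' l', u l' * c (f l') * c' l') := by
    have hinj : Injective fun l' => (f l', l') := fun _ _ h => congrArg Prod.snd h
    refine (hinj.hasSum_iff ?_).1 ?_
    · rintro ⟨l, l'⟩ hp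
      rw [if_neg]
      intro h
      exact hp ⟨l', by simp [show l = f l' from h]⟩
    · simpa [comp_def] using hu.hasSum.sub (hcross.hasSum.mul_left 2)
  have hprod : HasSum (fun p : Λ × Λ' => c p.1 ^ 2 * c' p.2 ^ 2)
      ((∑' l, c l ^ 2) * ∑' l', c' l' ^ 2) :=
    hc.hasSum.mul hc'.hasSum
      (hc.mul_of_nonneg hc' (fun l => sq_nonneg (c l)) fun l' => sq_nonneg (c' l'))
  refine ((hgraph.add hprod).congr_fun fun p => ?_).tsum_eq
  split_ifs <;> ring

section Indicator

variable {α : Type*}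

theorem mul_indicator_one_mul_apply (t : Set α) (r : ℝ) (f : α → ℝ) (x : α) :
    r * t.indicator (fun _ => (1 : ℝ)) x * f x = t.indicator (fun y => r * f y) x := by
  by_cases hx : x ∈ t <;> simp [hx]

theorem indicator_one_mul_indicator_one_of_subset {ι : Type*} [DecidableEq ι] {A : ι → Set α}
    (hdisj : Pairwise (Disjoint on A)) {t : Set α} {i : ι} (ht : t ⊆ A i) (j : ι) (x : α) :
    (A j).indicator (fun _ => (1 : ℝ)) x * t.indicator (fun _ => (1 : ℝ)) x
      = if j = i then t.indicator (fun _ => (1 : ℝ)) x else 0 := by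
  by_cases hx : x ∈ t
  · split_ifs with hji
    · simp [hji, hx, ht hx]
    · simp [Set.disjoint_left.1 (hdisj hji).symm (ht hx)]
  · simp [hx]

theorem tsum_mul_mul_indicator_one_of_mem {ι : Type*} {A : ι → Set α}
    (hdisj : Pairwise (Disjoint on A)) (g r : ι → ℝ) {i : ι} {x : α} (hx : x ∈ A i) :
    ∑' j, g j * (r j * (A j).indicator (fun _ => (1 : ℝ)) x) = g i * r i := by
  rw [tsum_eq_single i fun j hji => by
    simp [Set.indicator_of_notMem (Set.disjoint_left.1 (hdisj hji).symm hx)]]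
  simp [hx]

end Indicator

section Histogram

variable {α : Type*} [MeasurableSpace α] {μ : Measure α}

theorem integral_mul_indicator_one_mul {t : Set α} (ht : MeasurableSet t) (r : ℝ) (f : α → ℝ) :
    ∫ x, r * t.indicator (fun _ => (1 : ℝ)) x * f x ∂μ = r * ∫ x in t, f x ∂μ := by
  simp_rw [mul_indicator_one_mul_apply, integral_indicator ht, integral_const_mul]

theorem MeasureTheory.Integrable.mul_indicator_one_mul {f : α → ℝ} (hf : Integrable f μ) {t : Set α}
    (ht : MeasurableSet t) (r : ℝ) :
    Integrable (fun x => r * t.indicator (fun _ => (1 : ℝ)) x * f x) μ := by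
  simp_rw [mul_indicator_one_mul_apply]
  exact (hf.const_mul r).indicator ht

theorem integral_sub_mul_sub_mul {f g s : α → ℝ}
    (hfg : Integrable (fun x => f x * g x * s x) μ) (hf : Integrable (fun x => f x * s x) μ)
    (hg : Integrable (fun x => g x * s x) μ) (hs : Integrable s μ) (hs1 : ∫ x, s x ∂μ = 1) :
    ∫ x, (f x - ∫ y, f y * s y ∂μ) * (g x - ∫ y, g y * s y ∂μ) * s x ∂μ
      = ∫ x, f x * g x * s x ∂μ - (∫ x, f x * s x ∂μ) * ∫ x, g x * s x ∂μ := by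
  set a := ∫ y, f y * s y ∂μ
  set b := ∫ y, g y * s y ∂μ
  have hexpand : (fun x => (f x - a) * (g x - b) * s x)
      = fun x => (f x * g x * s x - b * (f x * s x)) - (a * (g x * s x) - a * b * s x) := by
    funext x; ring
  rw [hexpand, integral_sub, integral_sub hfg (hf.const_mul b),
    integral_sub (hg.const_mul a) (hs.const_mul _), integral_const_mul, integral_const_mul,
    integral_const_mul, hs1]
  · ring
  · exact hfg.sub (hf.const_mul b)
  · exact (hg.const_mul a).sub (hs.const_mul _)

theorem integral_cov_indicator_of_subset {ι : Type*} [DecidableEq ι] {A : ι → Set α}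
    (hdisj : Pairwise (Disjoint on A)) {t : Set α} {i : ι} (ht : t ⊆ A i) {j : ι}
    (hAj : MeasurableSet (A j)) (htm : MeasurableSet t) {s : α → ℝ} (hs : Integrable s μ)
    (hs1 : ∫ x, s x ∂μ = 1) (a b : ℝ) :
    ∫ x, (a * (A j).indicator (fun _ => (1 : ℝ)) x
          - ∫ y, a * (A j).indicator (fun _ => (1 : ℝ)) y * s y ∂μ)
        * (b * t.indicator (fun _ => (1 : ℝ)) x
          - ∫ y, b * t.indicator (fun _ => (1 : ℝ)) y * s y ∂μ) * s x ∂μ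
      = (if j = i then a * ∫ y, b * t.indicator (fun _ => (1 : ℝ)) y * s y ∂μ else 0)
        - (∫ y, a * (A j).indicator (fun _ => (1 : ℝ)) y * s y ∂μ)
          * ∫ y, b * t.indicator (fun _ => (1 : ℝ)) y * s y ∂μ := by
  have hprod : (fun x => a * (A j).indicator (fun _ => (1 : ℝ)) x
        * (b * t.indicator (fun _ => (1 : ℝ)) x) * s x)
      = fun x => (if j = i then a else 0) * (b * t.indicator (fun _ => (1 : ℝ)) x * s x) := by
    funext x
    have := indicator_one_mul_indicator_one_of_subset hdisj ht j x
    split_ifs at this ⊢ <;> linear_combination a * b * s x * this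
  have hbt := hs.mul_indicator_one_mul htm b
  rw [integral_sub_mul_sub_mul (hprod ▸ hbt.const_mul _) (hs.mul_indicator_one_mul hAj a) hbt
    hs hs1, hprod, integral_const_mul, ite_mul, zero_mul]

theorem sqrt_inv_toReal_sq_mul_setIntegral_le {t : Set α} (ht0 : μ t ≠ 0) (ht : μ t ≠ ⊤)
    {s : α → ℝ} (hs : IntegrableOn s t μ) {C : ℝ} (hC : ∀ᵐ x ∂μ, s x ≤ C) :
    √(μ t).toReal⁻¹ ^ 2 * ∫ x in t, s x ∂μ ≤ C := by
  rw [Real.sq_sqrt (inv_nonneg.2 ENNReal.toReal_nonneg),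
    inv_mul_le_iff₀ (ENNReal.toReal_pos ht0 ht)]
  calc ∫ x in t, s x ∂μ ≤ ∫ _ in t, C ∂μ := setIntegral_mono_ae hs (integrableOn_const ht) hC
    _ = (μ t).toReal * C := by rw [setIntegral_const, measureReal_def, smul_eq_mul]

theorem integral_eq_tsum_of_eqOn_const_mul {ι : Type*} [Countable ι] {A : ι → Set α}
    (hA : ∀ i, MeasurableSet (A i)) (hdisj : Pairwise (Disjoint on A))
    (hcover : ⋃ i, A i = Set.univ) {F s : α → ℝ} {a : ι → ℝ} (hF : ∀ i, ∀ x ∈ A i, F x = a i * s x)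
    (hs : Integrable s μ) (hsum : Summable fun i => ‖a i‖ * ∫ x in A i, ‖s x‖ ∂μ) :
    ∫ x, F x ∂μ = ∑' i, a i * ∫ x in A i, s x ∂μ := by
  have hon : ∀ i, IntegrableOn F (A i) μ := fun i =>
    IntegrableOn.congr_fun (hs.integrableOn.const_mul (a i)) (fun x hx => (hF i x hx).symm) (hA i)
  have hnorm : ∀ i, ∫ x in A i, ‖F x‖ ∂μ = ‖a i‖ * ∫ x in A i, ‖s x‖ ∂μ := fun i => by
    rw [setIntegral_congr_fun (hA i) fun x hx => by rw [hF i x hx, norm_mul],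
      integral_const_mul]
  have hint : IntegrableOn F (⋃ i, A i) μ :=
    integrableOn_iUnion_of_summable_integral_norm hon (by simpa only [hnorm] using hsum)
  rw [← setIntegral_univ, ← hcover, integral_iUnion hA hdisj hint]
  refine tsum_congr fun i => ?_
  rw [setIntegral_congr_fun (hA i) (hF i), integral_const_mul]

theorem summable_sq_of_eq_mul_setIntegral {ι : Type*} [Countable ι] {A : ι → Set α}
    (hA : ∀ i, MeasurableSet (A i)) (hdisj : Pairwise (Disjoint on A)) {s : α → ℝ}
    (hs0 : 0 ≤ s) (hs : Integrable s μ) {r g : ι → ℝ}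
    (hg : ∀ i, g i = r i * ∫ x in A i, s x ∂μ) {K : ℝ}
    (hK : ∀ i, r i ^ 2 * ∫ x in A i, s x ∂μ ≤ K) :
    Summable fun i => g i ^ 2 := by
  have he : Summable fun i => ∫ x in A i, s x ∂μ :=
    (hasSum_integral_iUnion hA hdisj hs.integrableOn).summable
  refine Summable.of_nonneg_of_le (fun i => sq_nonneg (g i)) (fun i => ?_) (he.mul_left K)
  rw [hg, mul_pow, sq (∫ x in A i, s x ∂μ), ← mul_assoc]
  exact mul_le_mul_of_nonneg_right (hK i) (setIntegral_nonneg (hA i) fun x _ => hs0 x)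

theorem integral_tsum_mul_tsum_mul_of_subset {Λ Λ' : Type*} [Countable Λ'] {A : Λ → Set α}
    {A' : Λ' → Set α} (hdisj : Pairwise (Disjoint on A)) (hA' : ∀ l', MeasurableSet (A' l'))
    (hdisj' : Pairwise (Disjoint on A')) (hcover' : ⋃ l', A' l' = Set.univ) {l₀ : Λ' → Λ}
    (hl₀ : ∀ l', A' l' ⊆ A (l₀ l')) {s : α → ℝ} (hs0 : 0 ≤ s) (hs : Integrable s μ)
    {r g : Λ → ℝ} {r' g' : Λ' → ℝ} (hg : ∀ l, g l = r l * ∫ x in A l, s x ∂μ)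
    (hg' : ∀ l', g' l' = r' l' * ∫ x in A' l', s x ∂μ) {K : ℝ}
    (hK : ∀ l, r l ^ 2 * ∫ x in A l, s x ∂μ ≤ K) (hsum' : Summable fun l' => g' l' ^ 2) :
    ∫ x, (∑' l, g l * (r l * (A l).indicator (fun _ => (1 : ℝ)) x))
        * (∑' l', g' l' * (r' l' * (A' l').indicator (fun _ => (1 : ℝ)) x)) * s x ∂μ
      = ∑' l', r (l₀ l') * g' l' * g (l₀ l') * g' l' := by
  have he0 : ∀ t, 0 ≤ ∫ x in t, s x ∂μ := fun t => setIntegral_nonneg_of_ae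
    (ae_of_all _ fun x => hs0 x)
  refine (integral_eq_tsum_of_eqOn_const_mul hA' hdisj' hcover'
    (a := fun l' => g (l₀ l') * r (l₀ l') * (g' l' * r' l')) (fun l' x hx => ?_) hs ?_).trans
    (tsum_congr fun l' => ?_)
  · rw [tsum_mul_mul_indicator_one_of_mem hdisj g r (hl₀ l' hx),
      tsum_mul_mul_indicator_one_of_mem hdisj' g' r' hx]
  · refine Summable.of_nonneg_of_le (fun _ => by positivity) (fun l' => ?_) (hsum'.mul_left K)
    have hnorm : ∫ x in A' l', ‖s x‖ ∂μ = ∫ x in A' l', s x ∂μ := by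
      simp_rw [Real.norm_of_nonneg (hs0 _)]
    calc ‖g (l₀ l') * r (l₀ l') * (g' l' * r' l')‖ * ∫ x in A' l', ‖s x‖ ∂μ
        = (r (l₀ l') ^ 2 * ∫ x in A (l₀ l'), s x ∂μ) * g' l' ^ 2 := by
          rw [hnorm, hg, hg', Real.norm_eq_abs]
          set e := ∫ x in A (l₀ l'), s x ∂μ
          set e' := ∫ x in A' l', s x ∂μ
          have he : 0 ≤ e := he0 _
          have he' : 0 ≤ e' := he0 _
          rw [show r (l₀ l') * e * r (l₀ l') * (r' l' * e' * r' l')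
            = (r (l₀ l') ^ 2 * e) * (r' l' ^ 2 * e') by ring, abs_of_nonneg (by positivity)]
          ring
      _ ≤ K * g' l' ^ 2 := mul_le_mul_of_nonneg_right (hK _) (sq_nonneg _)
  · rw [hg' l']
    ring

end Histogram

theorem stmt14_general {Λ Λ' : Type*} [Countable Λ] [Countable Λ']
    (A : Λ → Set ℝ) (A' : Λ' → Set ℝ)
    (hA : ∀ l, MeasurableSet (A l)) (hA' : ∀ l, MeasurableSet (A' l))
    (hdisj : Pairwise (Function.onFun Disjoint A))
    (hdisj' : Pairwise (Function.onFun Disjoint A'))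
    (hcover' : (⋃ l, A' l) = Set.univ)
    (hrefine : ∀ l', ∃ l, A' l' ⊆ A l)
    (d : ℕ)
    (hvol' : ∀ l', 0 < MeasureTheory.volume (A' l') ∧ MeasureTheory.volume (A' l') < ⊤)
    (s : ℝ → ℝ) (hs0 : 0 ≤ s) (hsI : Integrable s) (hs1 : (∫ x, s x) = 1)
    (hsb : MemLp s ⊤ volume) :
    let ψ : Λ → ℝ → ℝ := fun l x =>
      Real.sqrt d * (A l).indicator (fun _ => (1 : ℝ)) x
    let ψ' : Λ' → ℝ → ℝ := fun l x =>
      Real.sqrt ((MeasureTheory.volume (A' l)).toReal)⁻¹ *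
        (A' l).indicator (fun _ => (1 : ℝ)) x
    let c : Λ → ℝ := fun l => ∫ x, ψ l x * s x
    let c' : Λ' → ℝ := fun l => ∫ x, ψ' l x * s x
    let sm : ℝ → ℝ := fun x => ∑' l, c l * ψ l x
    let sm' : ℝ → ℝ := fun x => ∑' l, c' l * ψ' l x
    (∑' p : Λ × Λ', (∫ x, (ψ p.1 x - c p.1) * (ψ' p.2 x - c' p.2) * s x) ^ 2)
      = d * (∑' l, (c' l) ^ 2) - 2 * (∫ x, sm x * sm' x * s x)
        + (∑' l, (c l) ^ 2) * (∑' l, (c' l) ^ 2) := by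
  intro ψ ψ' c c' sm sm'
  classical
  choose l₀ hl₀ using hrefine
  have hc : ∀ l, c l = √d * ∫ x in A l, s x := fun l =>
    integral_mul_indicator_one_mul (hA l) _ s
  have hc' : ∀ l', c' l' = √(volume (A' l')).toReal⁻¹ * ∫ x in A' l', s x := fun l' =>
    integral_mul_indicator_one_mul (hA' l') _ s
  have hK : ∀ l, √d ^ 2 * ∫ x in A l, s x ≤ d := fun l => by
    rw [Real.sq_sqrt d.cast_nonneg]
    exact mul_le_of_le_one_right d.cast_nonneg
      (hs1 ▸ setIntegral_le_integral hsI (ae_of_all _ hs0))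
  have hK' : ∀ l', √(volume (A' l')).toReal⁻¹ ^ 2 * ∫ x in A' l', s x ≤ lpNorm s ⊤ volume :=
    fun l' => sqrt_inv_toReal_sq_mul_setIntegral_le (hvol' l').1.ne' (hvol' l').2.ne
      hsI.integrableOn ((ae_le_lpNorm_exponent_top hsb).mono fun x hx => (le_abs_self _).trans hx)
  have hsum := summable_sq_of_eq_mul_setIntegral hA hdisj hs0 hsI hc hK
  have hsum' := summable_sq_of_eq_mul_setIntegral hA' hdisj' hs0 hsI hc' hK'
  have hsq : ∀ l', (√d * c' l') ^ 2 = d * c' l' ^ 2 := fun l' => by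
    rw [mul_pow, Real.sq_sqrt d.cast_nonneg]
  calc _ = ∑' p : Λ × Λ', ((if p.1 = l₀ p.2 then √d * c' p.2 else 0) - c p.1 * c' p.2) ^ 2 :=
        tsum_congr fun p => by
          rw [integral_cov_indicator_of_subset hdisj (hl₀ p.2) (hA p.1) (hA' p.2) hsI hs1]
    _ = ∑' l', (√d * c' l') ^ 2 - 2 * ∑' l', √d * c' l' * c (l₀ l') * c' l'
        + (∑' l, c l ^ 2) * ∑' l', c' l' ^ 2 :=
      tsum_sq_ite_graph_sub_mul l₀ (u := fun l' => √d * c' l')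
        (by simpa only [hsq] using hsum'.mul_left (d : ℝ)) hsum hsum'
    _ = _ := by
      rw [integral_tsum_mul_tsum_mul_of_subset (r := fun _ => √d) hdisj hA' hdisj' hcover' hl₀
        hs0 hsI hc hc' hK hsum', tsum_congr hsq, tsum_mul_left]

/-- Histogram case: `m = (A l)` is a regular partition of `ℝ` with cells of Lebesgue
measure `1/d`, `m' = (A' l')` a subpartition of `m`, `ψ_λ = μ(λ)^{−1/2} 1_λ`, and
`ξ₁` has density `s`.  Then
`β(Λ_m, Λ_{m'}) = ∑_{λ,λ'} (E[(ψ_λ(ξ₁)−Pψ_λ)(ψ_{λ'}(ξ₁)−Pψ_{λ'})])²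
  = d ‖s_{m'}‖² − 2 P(s_m s_{m'}) + ‖s_m‖² ‖s_{m'}‖²`. -/
theorem stmt14 {Λ Λ' : Type*} [Countable Λ] [Countable Λ']
    (A : Λ → Set ℝ) (A' : Λ' → Set ℝ)
    (hA : ∀ l, MeasurableSet (A l)) (hA' : ∀ l, MeasurableSet (A' l))
    (hdisj : Pairwise (Function.onFun Disjoint A))
    (hdisj' : Pairwise (Function.onFun Disjoint A'))
    (hcover : (⋃ l, A l) = Set.univ) (hcover' : (⋃ l, A' l) = Set.univ)
    (hrefine : ∀ l', ∃ l, A' l' ⊆ A l)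
    (d : ℕ) (hd : 0 < d)
    (hvol : ∀ l, MeasureTheory.volume (A l) = (d : ENNReal)⁻¹)
    (hvol' : ∀ l', 0 < MeasureTheory.volume (A' l') ∧ MeasureTheory.volume (A' l') < ⊤)
    (s : ℝ → ℝ) (hs0 : 0 ≤ s) (hsI : Integrable s) (hs1 : (∫ x, s x) = 1)
    (hsb : MemLp s ⊤ volume) :
    let ψ : Λ → ℝ → ℝ := fun l x =>
      Real.sqrt d * (A l).indicator (fun _ => (1 : ℝ)) x
    let ψ' : Λ' → ℝ → ℝ := fun l x =>
      Real.sqrt ((MeasureTheory.volume (A' l)).toReal)⁻¹ *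
        (A' l).indicator (fun _ => (1 : ℝ)) x
    let c : Λ → ℝ := fun l => ∫ x, ψ l x * s x
    let c' : Λ' → ℝ := fun l => ∫ x, ψ' l x * s x
    let sm : ℝ → ℝ := fun x => ∑' l, c l * ψ l x
    let sm' : ℝ → ℝ := fun x => ∑' l, c' l * ψ' l x
    (∑' p : Λ × Λ', (∫ x, (ψ p.1 x - c p.1) * (ψ' p.2 x - c' p.2) * s x) ^ 2)
      = d * (∑' l, (c' l) ^ 2) - 2 * (∫ x, sm x * sm' x * s x)
        + (∑' l, (c l) ^ 2) * (∑' l, (c' l) ^ 2) :=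
  stmt14_general A A' hA hA' hdisj hdisj' hcover' hrefine d hvol' s hs0 hsI hs1 hsb
end

section
/- The hold-out penalty decomposes as pen_HO(m,T,x) = 2x(1−τ)² [ ‖ŝ_m^{(T)} − s_m‖² + ‖ŝ_m^{(T^c)} − s_m‖² − 2(P_n^{(T)} − P)(ŝ_m^{(T^c)} − s_m) ], and consequently E[pen_HO(m,T,x)] = 2x·((1−τ)/τ)·D_m/n, where τ = |T|/n and D_m = PΨ_m − ‖s_m‖². -/
/-!
The full-sample mean is the convex combination `τ ŝ^{(T)} + (1 - τ) ŝ^{(Tᶜ)}`, so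
`ŝ^{(T)} - ŝ = (1 - τ) (ŝ^{(T)} - ŝ^{(Tᶜ)})`; centring both hold-out means at `s_m` gives the
decomposition. For the expectation, `P_n^{(T)} f - P_n^{(Tᶜ)} f = ∑ᵢ aᵢ f(ξᵢ)` with weights
summing to `0` and with `∑ᵢ aᵢ² = 1/|T| + 1/|Tᶜ|`, so by independence its second moment is
`(1/|T| + 1/|Tᶜ|) Var f`, and `∑_λ Var ψ_λ = D_m`.
-/

open Finset MeasureTheory

open ProbabilityTheory

section WeightedSum

variable {ι X : Type*} [Fintype ι] [MeasurableSpace X] {P : Measure X} [IsProbabilityMeasure P]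
  {f : X → ℝ}

lemma memLp_sum_mul_eval (hf : MemLp f 2 P) (a : ι → ℝ) :
    MemLp (fun ω => ∑ i, a i * f (ω i)) 2 (Measure.pi fun _ => P) :=
  memLp_finsetSum _ fun i _ =>
    (hf.const_mul (a i)).comp_measurePreserving (measurePreserving_eval _ i)

lemma integral_sum_mul_eval (hf : Integrable f P) (a : ι → ℝ) :
    ∫ ω, ∑ i, a i * f (ω i) ∂(Measure.pi fun _ => P) = (∑ i, a i) * ∫ y, f y ∂P := by
  rw [integral_finsetSum (f := fun i (ω : ι → X) => a i * f (ω i)) _ fun i _ =>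
    integrable_comp_eval (μ := fun _ => P) (f := fun y => a i * f y) (hf.const_mul (a i)), sum_mul]
  refine sum_congr rfl fun i _ => ?_
  rw [integral_const_mul, integral_comp_eval hf.aestronglyMeasurable]

lemma integral_sq_sum_mul_eval (hf : MemLp f 2 P) (a : ι → ℝ) :
    ∫ ω, (∑ i, a i * f (ω i)) ^ 2 ∂(Measure.pi fun _ => P) =
      (∑ i, a i ^ 2) * Var[f; P] + ((∑ i, a i) * ∫ y, f y ∂P) ^ 2 := by
  have hvar : Var[fun ω => ∑ i, a i * f (ω i); Measure.pi fun _ => P] =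
      (∑ i, a i ^ 2) * Var[f; P] := by
    have := variance_sum_pi (μ := fun _ => P) fun i => hf.const_mul (a i)
    simp only [variance_const_mul, ← sum_mul] at this
    convert this using 2
    ext ω
    simp only [Finset.sum_apply]
  rw [variance_eq_sub (memLp_sum_mul_eval hf a),
    integral_sum_mul_eval (hf.integrable one_le_two)] at hvar
  simp only [Pi.pow_apply] at hvar
  linarith

end WeightedSum

section HoldOutWeight

variable {ι : Type*} [Fintype ι] [DecidableEq ι] (T : Finset ι)

noncomputable def holdOutWeight (i : ι) : ℝ :=
  if i ∈ T then (#T : ℝ)⁻¹ else -(#Tᶜ : ℝ)⁻¹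

variable {T}

lemma sum_holdOutWeight (hT : T.Nonempty) (hTc : Tᶜ.Nonempty) : ∑ i, holdOutWeight T i = 0 := by
  rw [← sum_add_sum_compl T]
  have hT' : ∀ i ∈ T, holdOutWeight T i = (#T : ℝ)⁻¹ := fun i hi => if_pos hi
  have hTc' : ∀ i ∈ Tᶜ, holdOutWeight T i = -(#Tᶜ : ℝ)⁻¹ := fun i hi => if_neg (mem_compl.mp hi)
  rw [sum_congr rfl hT', sum_congr rfl hTc', sum_const, sum_const, nsmul_eq_mul, nsmul_eq_mul,
    mul_inv_cancel₀ (by simpa using hT.ne_empty), mul_neg,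
    mul_inv_cancel₀ (by simpa using hTc.ne_empty), add_neg_cancel]

lemma sum_holdOutWeight_sq : ∑ i, holdOutWeight T i ^ 2 = (#T : ℝ)⁻¹ + (#Tᶜ : ℝ)⁻¹ := by
  rw [← sum_add_sum_compl T]
  have hT' : ∀ i ∈ T, holdOutWeight T i ^ 2 = (#T : ℝ)⁻¹ ^ 2 := fun i hi => by
    rw [holdOutWeight, if_pos hi]
  have hTc' : ∀ i ∈ Tᶜ, holdOutWeight T i ^ 2 = (#Tᶜ : ℝ)⁻¹ ^ 2 := fun i hi => by
    rw [holdOutWeight, if_neg (mem_compl.mp hi), neg_sq]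
  rw [sum_congr rfl hT', sum_congr rfl hTc', sum_const, sum_const, nsmul_eq_mul, nsmul_eq_mul,
    inv_pow, inv_pow, ← div_eq_mul_inv, ← div_eq_mul_inv, sq, sq, div_self_mul_self',
    div_self_mul_self']

end HoldOutWeight

section EmpiricalMean

variable {X : Type*} {n : ℕ} (ξ : Fin n → X) (T : Finset (Fin n)) (f : X → ℝ)

lemma card_mul_emp : (#T : ℝ) * emp ξ T f = ∑ i ∈ T, f (ξ i) := by
  rcases T.eq_empty_or_nonempty with rfl | hT
  · simp [emp]
  · rw [emp, ← mul_assoc, mul_inv_cancel₀ (by simpa using hT.ne_empty), one_mul]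

lemma emp_sub_emp_compl : emp ξ T f - emp ξ Tᶜ f = ∑ i, holdOutWeight T i * f (ξ i) := by
  rw [← sum_add_sum_compl T, emp, emp, mul_sum, mul_sum, sub_eq_add_neg, ← sum_neg_distrib]
  congr 1 <;> refine sum_congr rfl fun i hi => ?_
  · rw [holdOutWeight, if_pos hi]
  · rw [holdOutWeight, if_neg (mem_compl.mp hi), neg_mul]

lemma emp_sub_emp_univ :
    emp ξ T f - emp ξ univ f = (1 - #T / n) * (emp ξ T f - emp ξ Tᶜ f) := by
  rcases Nat.eq_zero_or_pos n with rfl | hn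
  · simp [emp, eq_empty_of_isEmpty T]
  have hn' : (n : ℝ) ≠ 0 := by positivity
  have hsplit : emp ξ univ f = (#T * emp ξ T f + (n - #T) * emp ξ Tᶜ f) / n := by
    rw [eq_div_iff hn', mul_comm]
    have := card_mul_emp ξ univ f
    rw [card_univ, Fintype.card_fin] at this
    rw [this, card_mul_emp, ← sum_add_sum_compl T, ← card_mul_emp ξ Tᶜ, card_compl,
      Fintype.card_fin, Nat.cast_sub (card_le_univ T |>.trans_eq (Fintype.card_fin n))]
  rw [hsplit]
  field_simp
  ring

lemma sq_emp_sub_emp_univ (c : ℝ) :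
    (emp ξ T f - emp ξ univ f) ^ 2 = (1 - #T / n) ^ 2 * ((emp ξ T f - c) ^ 2
      + (emp ξ Tᶜ f - c) ^ 2 - 2 * ((emp ξ T f - c) * (emp ξ Tᶜ f - c))) := by
  rw [emp_sub_emp_univ]
  ring

end EmpiricalMean

section HoldOut

variable {X : Type*} [MeasurableSpace X] {P : Measure X} [IsProbabilityMeasure P] {n : ℕ}
  {f : X → ℝ} {T : Finset (Fin n)}

lemma integrable_sq_emp_sub_emp_compl (hf : MemLp f 2 P) :
    Integrable (fun ω => (emp ω T f - emp ω Tᶜ f) ^ 2) (Measure.pi fun _ => P) := by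
  simpa only [emp_sub_emp_compl] using (memLp_sum_mul_eval hf _).integrable_sq

lemma integral_sq_emp_sub_emp_compl (hf : MemLp f 2 P) (hT : T.Nonempty) (hTc : Tᶜ.Nonempty) :
    ∫ ω, (emp ω T f - emp ω Tᶜ f) ^ 2 ∂(Measure.pi fun _ => P) =
      ((#T : ℝ)⁻¹ + (#Tᶜ : ℝ)⁻¹) * Var[f; P] := by
  simp only [emp_sub_emp_compl]
  rw [integral_sq_sum_mul_eval hf, sum_holdOutWeight_sq, sum_holdOutWeight hT hTc]
  ring

end HoldOut

lemma sq_one_sub_div_mul_inv_add_inv {t n : ℝ} (ht : 0 < t) (htn : t < n) :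
    (1 - t / n) ^ 2 * (t⁻¹ + (n - t)⁻¹) = (1 - t / n) / (t / n) / n := by
  have : n - t ≠ 0 := sub_ne_zero.mpr htn.ne'
  have : n ≠ 0 := (ht.trans htn).ne'
  field_simp
  ring

theorem stmt16_general {X : Type*} [MeasurableSpace X] (P : Measure X) [IsProbabilityMeasure P]
    {n : ℕ}
    {Λ : Type*} [Fintype Λ] (ψ : Λ → X → ℝ)
    (hψ : ∀ l, MemLp (ψ l) 2 P)
    (T : Finset (Fin n)) (hT0 : 0 < T.card) (hTn : T.card < n) (x : ℝ) :
    let μn : Measure (Fin n → X) := Measure.pi fun _ => P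
    let τ : ℝ := (T.card : ℝ) / n
    let c : Λ → ℝ := fun l => ∫ y, ψ l y ∂P
    let Dm : ℝ := (∑ l, ∫ y, (ψ l y) ^ 2 ∂P) - ∑ l, (c l) ^ 2
    let penHO : (Fin n → X) → ℝ := fun ξ =>
      2 * x * ∑ l, (emp ξ T (ψ l) - emp ξ Finset.univ (ψ l)) ^ 2
    (∀ ξ : Fin n → X,
      penHO ξ = 2 * x * (1 - τ) ^ 2 *
        ((∑ l, (emp ξ T (ψ l) - c l) ^ 2) + (∑ l, (emp ξ Tᶜ (ψ l) - c l) ^ 2)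
          - 2 * ∑ l, (emp ξ T (ψ l) - c l) * (emp ξ Tᶜ (ψ l) - c l))) ∧
    (∫ ω, penHO ω ∂μn) = 2 * x * ((1 - τ) / τ) * Dm / n := by
  intro μn τ c Dm penHO
  refine ⟨fun ξ => ?_, ?_⟩
  · simp only [penHO, τ]
    rw [sum_congr rfl fun l _ => sq_emp_sub_emp_univ ξ T (ψ l) (c l)]
    simp only [← mul_sum, sum_sub_distrib, sum_add_distrib]
    ring
  have hTc : Tᶜ.Nonempty := by
    rw [← card_pos, card_compl, Fintype.card_fin]
    omega
  have hcard : (#Tᶜ : ℝ) = n - #T := by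
    rw [card_compl, Fintype.card_fin, Nat.cast_sub hTn.le]
  have hDm : Dm = ∑ l, Var[ψ l; P] := by
    simp only [Dm, c, ← sum_sub_distrib, variance_eq_sub (hψ _), Pi.pow_apply]
  calc ∫ ω, penHO ω ∂μn
      = 2 * x * (1 - τ) ^ 2 * ∑ l, ∫ ω, (emp ω T (ψ l) - emp ω Tᶜ (ψ l)) ^ 2 ∂μn := by
        rw [← integral_finsetSum _ fun l _ => integrable_sq_emp_sub_emp_compl (hψ l),
          ← integral_const_mul]
        congr 1 with ω
        simp only [penHO, emp_sub_emp_univ ω T, mul_pow, ← mul_sum, τ]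
        ring
    _ = 2 * x * ((1 - τ) ^ 2 * ((#T : ℝ)⁻¹ + (n - #T : ℝ)⁻¹)) * Dm := by
        simp only [μn, integral_sq_emp_sub_emp_compl (hψ _) (card_pos.mp hT0) hTc, ← mul_sum,
          hDm, hcard]
        ring
    _ = 2 * x * ((1 - τ) / τ) * Dm / n := by
        rw [sq_one_sub_div_mul_inv_add_inv (by exact_mod_cast hT0) (by exact_mod_cast hTn)]
        ring

/-- Decomposition of the hold-out penalty
`pen_HO(m,T,x) = 2x(1−τ)² [‖ŝ_m^{(T)} − s_m‖² + ‖ŝ_m^{(T^c)} − s_m‖²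
  − 2(P_n^{(T)} − P)(ŝ_m^{(T^c)} − s_m)]`
and its expectation `E[pen_HO(m,T,x)] = 2x ((1−τ)/τ) D_m / n`. -/
theorem stmt16 {X : Type*} [MeasurableSpace X] (P : Measure X) [IsProbabilityMeasure P]
    {n : ℕ} (hn : 0 < n)
    {Λ : Type*} [Fintype Λ] (ψ : Λ → X → ℝ)
    (hψ : ∀ l, MemLp (ψ l) 2 P)
    (T : Finset (Fin n)) (hT0 : 0 < T.card) (hTn : T.card < n) (x : ℝ) :
    let μn : Measure (Fin n → X) := Measure.pi fun _ => P
    let τ : ℝ := (T.card : ℝ) / n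
    let c : Λ → ℝ := fun l => ∫ y, ψ l y ∂P
    let Dm : ℝ := (∑ l, ∫ y, (ψ l y) ^ 2 ∂P) - ∑ l, (c l) ^ 2
    let penHO : (Fin n → X) → ℝ := fun ξ =>
      2 * x * ∑ l, (emp ξ T (ψ l) - emp ξ Finset.univ (ψ l)) ^ 2
    (∀ ξ : Fin n → X,
      penHO ξ = 2 * x * (1 - τ) ^ 2 *
        ((∑ l, (emp ξ T (ψ l) - c l) ^ 2) + (∑ l, (emp ξ Tᶜ (ψ l) - c l) ^ 2)
          - 2 * ∑ l, (emp ξ T (ψ l) - c l) * (emp ξ Tᶜ (ψ l) - c l))) ∧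
    (∫ ω, penHO ω ∂μn) = 2 * x * ((1 - τ) / τ) * Dm / n :=
  stmt16_general P ψ hψ T hT0 hTn x
end
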